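/- Let k be a real quadratic field with trivial narrow ideal class group. Then the obstruction group B_S = V_S/(k^×)² is trivial for every finite set S of finite primes of k (not lying over 2). -/
import Mathlib

open scoped Classical
open NumberField IsDedekindDomain

lemma aux_torsion_pm (k : Type) [Field k] [NumberField k] (φ : k →+* ℝ)
    (ζ : (𝓞 k)ˣ) (hζ : ζ ∈ NumberField.Units.torsion k) : ζ = 1 ∨ ζ = -1 := by
  obtain ⟨n, hn, h1⟩ := isOfFinOrder_iff_pow_eq_one.mp hζ
  have hval : ((ζ : 𝓞 k) : k) ^ n = 1 := by
    have : ((ζ ^ n : (𝓞 k)ˣ) : 𝓞 k) = ((1 : (𝓞 k)ˣ) : 𝓞 k) := by rw [h1]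
    push_cast at this
    exact_mod_cast congrArg (algebraMap (𝓞 k) k) this
  have hx : φ (((ζ : 𝓞 k) : k)) ^ n = 1 := by
    rw [← map_pow, hval, map_one]
  have hinj : Function.Injective (φ.comp (algebraMap (𝓞 k) k)) :=
    φ.injective.comp (IsFractionRing.injective (𝓞 k) k)
  rcases (pow_eq_one_iff_of_ne_zero hn.ne').mp hx with h | ⟨h, -⟩ <;>
  · have hsq : ((ζ : 𝓞 k)) ^ 2 = 1 := by
      apply hinj
      simp only [RingHom.coe_comp, Function.comp_apply, map_pow, map_one]
      rw [h] <;> norm_num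
    have : ((ζ : 𝓞 k) - 1) * ((ζ : 𝓞 k) + 1) = 0 := by ring_nf; linear_combination hsq
    rcases mul_eq_zero.mp this with h' | h'
    · left; ext; rw [sub_eq_zero] at h'; simpa using h'
    · right; ext; rw [add_eq_zero_iff_eq_neg] at h'
      simp only [Units.val_neg, Units.val_one]; exact_mod_cast h'

/-- Sign bookkeeping: if the unit group of `k` has rank one and there exists a unit `v`
of mixed signs at the two real embeddings `φ₁, φ₂`, then every unit `z` that is positive
at both embeddings is a square of a unit. -/
lemma aux_unit_square (k : Type) [Field k] [NumberField k]
    (φ₁ φ₂ : k →+* ℝ) (hrank : NumberField.Units.rank k = 1)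
    (v z : (𝓞 k)ˣ)
    (hv1 : φ₁ (algebraMap (𝓞 k) k (v : 𝓞 k)) < 0)
    (hv2 : 0 < φ₂ (algebraMap (𝓞 k) k (v : 𝓞 k)))
    (hz1 : 0 < φ₁ (algebraMap (𝓞 k) k (z : 𝓞 k)))
    (hz2 : 0 < φ₂ (algebraMap (𝓞 k) k (z : 𝓞 k))) :
    ∃ w : (𝓞 k)ˣ, z = w * w := by
  set ι := algebraMap (𝓞 k) k with hι
  set i0 : Fin (NumberField.Units.rank k) := ⟨0, hrank ▸ one_pos⟩ with hi0
  set ε : (𝓞 k)ˣ := NumberField.Units.fundSystem k i0 with hε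
  have hcollapse : ∀ h : Fin (NumberField.Units.rank k) → (𝓞 k)ˣ, ∏ i, h i = h i0 := by
    intro h
    apply Finset.prod_eq_single_of_mem _ (Finset.mem_univ _)
    intro b _ hb
    exact absurd (Fin.ext (by omega)) hb
  have hdecomp : ∀ u : (𝓞 k)ˣ, ∃ (ζ : (𝓞 k)ˣ) (m : ℤ),
      (ζ = 1 ∨ ζ = -1) ∧ u = ζ * ε ^ m := by
    intro u
    obtain ⟨⟨ζ, e⟩, h, -⟩ := NumberField.Units.exist_unique_eq_mul_prod k u
    exact ⟨ζ.1, e i0, aux_torsion_pm k φ₁ ζ.1 ζ.2,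
      by rw [h, hcollapse fun i => NumberField.Units.fundSystem k i ^ e i]⟩
  set F₁ : (𝓞 k)ˣ →* ℝˣ := Units.map ((φ₁.comp ι).toMonoidHom) with hF₁
  set F₂ : (𝓞 k)ˣ →* ℝˣ := Units.map ((φ₂.comp ι).toMonoidHom) with hF₂
  have hval₁ : ∀ u : (𝓞 k)ˣ, (F₁ u : ℝ) = φ₁ (ι (u : 𝓞 k)) := fun _ => rfl
  have hval₂ : ∀ u : (𝓞 k)ˣ, (F₂ u : ℝ) = φ₂ (ι (u : 𝓞 k)) := fun _ => rfl
  set e₁ : ℝ := φ₁ (ι (ε : 𝓞 k)) with he₁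
  set e₂ : ℝ := φ₂ (ι (ε : 𝓞 k)) with he₂
  have he₁0 : e₁ ≠ 0 := by rw [he₁, ← hval₁]; exact Units.ne_zero _
  have he₂0 : e₂ ≠ 0 := by rw [he₂, ← hval₂]; exact Units.ne_zero _
  have hpow₁ : ∀ m : ℤ, φ₁ (ι ((ε ^ m : (𝓞 k)ˣ) : 𝓞 k)) = e₁ ^ m := by
    intro m
    rw [← hval₁, map_zpow, he₁, ← hval₁, Units.val_zpow_eq_zpow_val]
  have hpow₂ : ∀ m : ℤ, φ₂ (ι ((ε ^ m : (𝓞 k)ˣ) : 𝓞 k)) = e₂ ^ m := by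
    intro m
    rw [← hval₂, map_zpow, he₂, ← hval₂, Units.val_zpow_eq_zpow_val]
  have hmul₁ : ∀ x y : (𝓞 k)ˣ, φ₁ (ι ((x * y : (𝓞 k)ˣ) : 𝓞 k))
      = φ₁ (ι (x : 𝓞 k)) * φ₁ (ι (y : 𝓞 k)) := by
    intro x y; rw [Units.val_mul, map_mul, map_mul]
  have hmul₂ : ∀ x y : (𝓞 k)ˣ, φ₂ (ι ((x * y : (𝓞 k)ˣ) : 𝓞 k))
      = φ₂ (ι (x : 𝓞 k)) * φ₂ (ι (y : 𝓞 k)) := by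
    intro x y; rw [Units.val_mul, map_mul, map_mul]
  obtain ⟨ζv, m, hζv, hveq⟩ := hdecomp v
  have htneg : e₁ * e₂ < 0 := by
    have h1 : φ₁ (ι (v : 𝓞 k)) = φ₁ (ι (ζv : 𝓞 k)) * e₁ ^ m := by
      rw [hveq, hmul₁, hpow₁]
    have h2 : φ₂ (ι (v : 𝓞 k)) = φ₂ (ι (ζv : 𝓞 k)) * e₂ ^ m := by
      rw [hveq, hmul₂, hpow₂]
    have hζprod : φ₁ (ι (ζv : 𝓞 k)) * φ₂ (ι (ζv : 𝓞 k)) = 1 := by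
      rcases hζv with rfl | rfl <;> simp
    have hlt : (e₁ * e₂) ^ m < 0 := by
      have : φ₁ (ι (v : 𝓞 k)) * φ₂ (ι (v : 𝓞 k)) < 0 :=
        mul_neg_of_neg_of_pos hv1 hv2
      rw [h1, h2] at this
      calc (e₁ * e₂) ^ m = e₁ ^ m * e₂ ^ m := mul_zpow e₁ e₂ m
        _ = (φ₁ (ι (ζv : 𝓞 k)) * φ₂ (ι (ζv : 𝓞 k))) * (e₁ ^ m * e₂ ^ m) := by
            rw [hζprod, one_mul]
        _ < 0 := by nlinarith [this]
    by_contra hc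
    push_neg at hc
    rcases lt_or_eq_of_le hc with h | h
    · exact absurd (zpow_pos h m) (by linarith)
    · exact mul_ne_zero he₁0 he₂0 h.symm
  obtain ⟨ζz, n, hζz, hzeq⟩ := hdecomp z
  have h1 : φ₁ (ι (z : 𝓞 k)) = φ₁ (ι (ζz : 𝓞 k)) * e₁ ^ n := by
    rw [hzeq, hmul₁, hpow₁]
  have h2 : φ₂ (ι (z : 𝓞 k)) = φ₂ (ι (ζz : 𝓞 k)) * e₂ ^ n := by
    rw [hzeq, hmul₂, hpow₂]
  have hζprod : φ₁ (ι (ζz : 𝓞 k)) * φ₂ (ι (ζz : 𝓞 k)) = 1 := by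
    rcases hζz with rfl | rfl <;> simp
  have hn : Even n := by
    rcases Int.even_or_odd n with h | h
    · exact h
    · exfalso
      have hlt : (e₁ * e₂) ^ n < 0 := h.zpow_neg htneg
      have : 0 < φ₁ (ι (z : 𝓞 k)) * φ₂ (ι (z : 𝓞 k)) := mul_pos hz1 hz2
      rw [h1, h2] at this
      rw [mul_zpow] at hlt
      nlinarith [this, hζprod, hlt]
  obtain ⟨j, hj⟩ := hn
  have hsq : ε ^ n = ε ^ j * ε ^ j := by rw [hj, zpow_add]
  have hζz1 : ζz = 1 := by
    rcases hζz with h | h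
    · exact h
    · exfalso
      have hε0 : e₁ ^ j ≠ 0 := zpow_ne_zero j he₁0
      have : φ₁ (ι (z : 𝓞 k)) = -((e₁ ^ j) * (e₁ ^ j)) := by
        rw [h1, h, hj]
        simp only [Units.val_neg, Units.val_one, map_neg, map_one]
        rw [zpow_add₀ he₁0]
        ring
      nlinarith [this, hz1, sq_nonneg (e₁ ^ j)]
  exact ⟨ε ^ j, by rw [hzeq, hζz1, one_mul, hsq]⟩

set_option maxHeartbeats 1000000 in
/-- let `k` be a real quadratic field with trivial narrow ideal class
group.  Then the obstruction group `B_S = V_S/(k^×)²` is trivial for every finite set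
`S` of finite primes of `k` not lying over 2: every `a ∈ k^×` such that `aO_k` is the
square of a fractional ideal and `a` is a square in `k_𝔭^×` for all `𝔭 ∈ S` and at
both real primes (i.e. `a` is totally positive) is a square in `k^×`. -/
theorem BS_trivial_of_narrow_class_one (k : Type) [Field k] [NumberField k]
    (hdeg : Module.finrank ℚ k = 2)
    (hreal : ∀ v : InfinitePlace k, v.IsReal)
    (hnarrow : ∀ I : Ideal (𝓞 k), I ≠ ⊥ →
      ∃ g : 𝓞 k, I = Ideal.span {g} ∧ ∀ φ : k →+* ℝ, 0 < φ (algebraMap (𝓞 k) k g)) :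
    ∀ S : Finset (HeightOneSpectrum (𝓞 k)),
      (∀ v ∈ S, (2 : 𝓞 k) ∉ v.asIdeal) →
      ∀ a : k, a ≠ 0 →
        (∃ J : FractionalIdeal (nonZeroDivisors (𝓞 k)) k,
          FractionalIdeal.spanSingleton (nonZeroDivisors (𝓞 k)) a = J ^ 2) →
        (∀ v ∈ S, IsSquare (algebraMap k (v.adicCompletion k) a)) →
        (∀ φ : k →+* ℝ, 0 < φ a) →
        IsSquare a := by
  intro S _ a ha hJex _ hpos
  set ι := algebraMap (𝓞 k) k with hι
  have hinj : Function.Injective ι := IsFractionRing.injective (𝓞 k) k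
  -- two distinct real embeddings
  have h0 : InfinitePlace.nrComplexPlaces k = 0 := by
    have : IsEmpty { w : InfinitePlace k // w.IsComplex } :=
      ⟨fun w => (InfinitePlace.not_isReal_iff_isComplex.mpr w.2) (hreal w.1)⟩
    exact Fintype.card_eq_zero
  have h1 : InfinitePlace.nrRealPlaces k = 2 := by
    have := InfinitePlace.card_add_two_mul_card_eq_rank k
    omega
  have hcard : Fintype.card (InfinitePlace k) = 2 := by
    rw [InfinitePlace.card_eq_nrRealPlaces_add_nrComplexPlaces, h0, h1]
  have hrank : Units.rank k = 1 := by rw [Units.rank, hcard]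
  obtain ⟨w₁, w₂, hw⟩ := Fintype.exists_pair_of_one_lt_card
    (α := InfinitePlace k) (by omega)
  set φ₁ := InfinitePlace.embedding_of_isReal (hreal w₁) with hφ₁
  set φ₂ := InfinitePlace.embedding_of_isReal (hreal w₂) with hφ₂
  have hφne : φ₁ ≠ φ₂ := by
    intro h
    apply hw
    apply DFunLike.ext
    intro x
    rw [← InfinitePlace.norm_embedding_of_isReal (hreal w₁),
        ← InfinitePlace.norm_embedding_of_isReal (hreal w₂), ← hφ₁, ← hφ₂, h]
  -- a unit of mixed signs
  obtain ⟨y, hy⟩ : ∃ y : 𝓞 k, φ₁ (ι y) ≠ φ₂ (ι y) := by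
    by_contra h
    push_neg at h
    apply hφne
    ext x
    obtain ⟨p, q, -, rfl⟩ := IsFractionRing.div_surjective (A := 𝓞 k) x
    rw [map_div₀, map_div₀, h p, h q]
  obtain ⟨y, hylt⟩ : ∃ y : 𝓞 k, φ₁ (ι y) < φ₂ (ι y) := by
    rcases lt_or_gt_of_ne hy with h | h
    · exact ⟨y, h⟩
    · exact ⟨-y, by simp only [map_neg]; linarith⟩
  obtain ⟨q, hq1, hq2⟩ := exists_rat_btwn hylt
  set x : 𝓞 k := (q.den : 𝓞 k) * y - (q.num : 𝓞 k) with hx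
  have hxval : ∀ φ : k →+* ℝ, φ (ι x) = (q.den : ℝ) * φ (ι y) - (q.num : ℝ) := by
    intro φ
    rw [hx, map_sub, map_mul, map_natCast, map_intCast, map_sub, map_mul,
      map_natCast, map_intCast]
  have hd : (0:ℝ) < (q.den : ℝ) := by exact_mod_cast q.pos
  have hnum : ((q.num : ℝ)) = (q : ℝ) * (q.den : ℝ) := by
    rw [Rat.cast_def]; field_simp
  have hx1 : φ₁ (ι x) < 0 := by rw [hxval]; nlinarith [hq1]
  have hx2 : 0 < φ₂ (ι x) := by rw [hxval]; nlinarith [hq2]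
  have hx0 : x ≠ 0 := by
    intro h
    rw [h, map_zero, map_zero] at hx1
    exact lt_irrefl 0 hx1
  obtain ⟨g', hsp, hg'pos⟩ := hnarrow (Ideal.span {x})
    (by rwa [ne_eq, Ideal.span_singleton_eq_bot])
  obtain ⟨v, hv⟩ := Ideal.span_singleton_eq_span_singleton.mp hsp
  have hveq : φ₁ (ι g') = φ₁ (ι x) * φ₁ (ι (v : 𝓞 k)) := by
    rw [← hv, map_mul, map_mul]
  have hveq2 : φ₂ (ι g') = φ₂ (ι x) * φ₂ (ι (v : 𝓞 k)) := by
    rw [← hv, map_mul, map_mul]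
  have hv1 : φ₁ (ι (v : 𝓞 k)) < 0 := by nlinarith [hg'pos φ₁, hx1]
  have hv2 : 0 < φ₂ (ι (v : 𝓞 k)) := by nlinarith [hg'pos φ₂, hx2]
  -- the fractional ideal argument
  obtain ⟨J, hJ⟩ := hJex
  obtain ⟨c, I, hc0, hJc⟩ := FractionalIdeal.exists_eq_spanSingleton_mul J
  set R0 := nonZeroDivisors (𝓞 k)
  have hc0' : ι c ≠ 0 := fun h => hc0 ((map_eq_zero_iff ι hinj).mp h)
  have hE0 : FractionalIdeal.spanSingleton R0 ((ι c) ^ 2 * a)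
      = (I : FractionalIdeal R0 k) ^ 2 := by
    calc FractionalIdeal.spanSingleton R0 ((ι c) ^ 2 * a)
        = FractionalIdeal.spanSingleton R0 ((ι c) ^ 2)
            * FractionalIdeal.spanSingleton R0 a := by
          rw [FractionalIdeal.spanSingleton_mul_spanSingleton]
      _ = FractionalIdeal.spanSingleton R0 ((ι c) ^ 2)
            * (FractionalIdeal.spanSingleton R0 (ι c)⁻¹ * ↑I) ^ 2 := by
          rw [hJ, hJc]
      _ = (I : FractionalIdeal R0 k) ^ 2 := by
          rw [mul_pow, FractionalIdeal.spanSingleton_pow, ← mul_assoc,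
            FractionalIdeal.spanSingleton_mul_spanSingleton,
            ← mul_pow, mul_inv_cancel₀ hc0', one_pow,
            FractionalIdeal.spanSingleton_one, one_mul]
  have hIbot : I ≠ ⊥ := by
    intro h
    rw [h, FractionalIdeal.coeIdeal_bot, zero_pow (two_ne_zero)] at hE0
    exact (mul_ne_zero (pow_ne_zero 2 hc0') ha)
      (FractionalIdeal.spanSingleton_eq_zero_iff.mp hE0)
  obtain ⟨g, hg, hgpos⟩ := hnarrow I hIbot
  have hg0 : g ≠ 0 := by
    intro h
    have := hgpos φ₁
    rw [h, map_zero, map_zero] at this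
    exact lt_irrefl 0 this
  rw [hg, FractionalIdeal.coeIdeal_span_singleton,
    FractionalIdeal.spanSingleton_pow] at hE0
  obtain ⟨z, hz⟩ := FractionalIdeal.spanSingleton_eq_spanSingleton.mp hE0
  rw [Units.smul_def, Algebra.smul_def] at hz
  -- hz : ι ↑z * (ι c ^ 2 * a) = ι g ^ 2
  have hg0' : ∀ φ : k →+* ℝ, φ (ι g) ≠ 0 := fun φ => (hgpos φ).ne'
  have hzpos : ∀ φ : k →+* ℝ, 0 < φ a → 0 < φ (ι (z : 𝓞 k)) := by
    intro φ hφa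
    have hE : φ (ι (z : 𝓞 k)) * (φ (ι c) ^ 2 * φ a) = φ (ι g) ^ 2 := by
      have := congrArg φ hz
      rwa [map_mul, map_mul, map_pow, map_pow] at this
    have hφc : φ (ι c) ≠ 0 := fun h => hc0' (φ.injective (by rw [h, map_zero]))
    have hc2 : 0 < φ (ι c) ^ 2 := by positivity
    have hg2 : 0 < φ (ι g) ^ 2 := by
      have := hg0' φ
      positivity
    have hprod : 0 < φ (ι c) ^ 2 * φ a := mul_pos hc2 hφa
    have : φ (ι (z : 𝓞 k)) = φ (ι g) ^ 2 / (φ (ι c) ^ 2 * φ a) := by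
      rw [eq_div_iff hprod.ne']
      exact hE
    rw [this]
    exact div_pos hg2 hprod
  obtain ⟨w, hw⟩ := aux_unit_square k φ₁ φ₂ hrank v z hv1 hv2
    (hzpos φ₁ (hpos φ₁)) (hzpos φ₂ (hpos φ₂))
  have hwz : ι (z : 𝓞 k) = ι (w : 𝓞 k) * ι (w : 𝓞 k) := by
    rw [hw, Units.val_mul, map_mul]
  have hw0 : ι (w : 𝓞 k) ≠ 0 := fun h =>
    Units.ne_zero w ((map_eq_zero_iff ι hinj).mp h)
  refine ⟨ι g / (ι (w : 𝓞 k) * ι c), ?_⟩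
  rw [hwz] at hz
  rw [div_mul_div_comm, eq_div_iff
    (mul_ne_zero (mul_ne_zero hw0 hc0') (mul_ne_zero hw0 hc0'))]
  linear_combination hz
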